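/- Let U ⊆ ℝ^A be open, h : U → ℝ twice continuously differentiable, x* ∈ U, and let x : I → U be a curve differentiable at t ∈ I. Then the map s ↦ D_h(x*, x(s)) is differentiable at t with derivative (x(t) − x*)ᵀ · Hess h(x(t)) · x'(t), where Hess h(x(t)) is the Hessian matrix of h at x(t). -/

import Mathlib

open Matrix

noncomputable section

lemma bilin_expand {A : Type*} [Fintype A] [DecidableEq A]
    (B : (A → ℝ) →L[ℝ] (A → ℝ) →L[ℝ] ℝ) (v w : A → ℝ) :
    B v w = v ⬝ᵥ (Matrix.of fun α β => B (Pi.single α 1) (Pi.single β 1)).mulVec w := by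
  have hv : v = ∑ α, v α • (Pi.single α 1 : A → ℝ) := by
    ext β; simp [Pi.single_apply, eq_comm]
  have hw : w = ∑ β, w β • (Pi.single β 1 : A → ℝ) := by
    ext γ; simp [Pi.single_apply, eq_comm]
  rw [show B v w = B (∑ α, v α • (Pi.single α 1 : A → ℝ)) (∑ β, w β • (Pi.single β 1 : A → ℝ)) by
    rw [← hv, ← hw]]
  simp only [map_sum, _root_.map_smul, ContinuousLinearMap.coe_sum', ContinuousLinearMap.coe_smul',
    Finset.sum_apply, Pi.smul_apply, smul_eq_mul]
  simp only [dotProduct, Matrix.mulVec, Matrix.of_apply, Finset.mul_sum]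
  rw [Finset.sum_comm]
  exact Finset.sum_congr rfl fun α _ =>
    Finset.sum_congr rfl fun β _ => by ring

/-- radial derivative of the Bregman divergence.  If `h` is `C²` on an open set
`U`, `x* ∈ U`, and `x` is a curve in `U` differentiable at `t` with velocity `x'`, then
`s ↦ D_h(x*, x(s)) = h(x*) − h(x(s)) − ∇h(x(s))·(x* − x(s))` is differentiable at `t` with
derivative `(x(t) − x*)ᵀ · Hess h(x(t)) · x'`. -/
theorem stmt_7 {A : Type*} [Fintype A] [DecidableEq A] [Nonempty A]
    (U : Set (A → ℝ)) (hU : IsOpen U)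
    (h : (A → ℝ) → ℝ) (hh : ContDiffOn ℝ 2 h U)
    (xstar : A → ℝ) (hxstar : xstar ∈ U)
    (x : ℝ → (A → ℝ)) (hxU : ∀ s : ℝ, x s ∈ U)
    (t : ℝ) (x' : A → ℝ) (hx : HasDerivAt x x' t) :
    HasDerivAt (fun s => h xstar - h (x s) - fderiv ℝ h (x s) (xstar - x s))
      ((x t - xstar) ⬝ᵥ
        (Matrix.of fun α β =>
          fderiv ℝ (fderiv ℝ h) (x t) (Pi.single α 1) (Pi.single β 1)).mulVec x') t := by
  have hca : ContDiffAt ℝ 2 h (x t) := hh.contDiffAt (hU.mem_nhds (hxU t))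
  -- h differentiable at x t
  have hdh : HasFDerivAt h (fderiv ℝ h (x t)) (x t) :=
    (hca.differentiableAt (by norm_num)).hasFDerivAt
  -- fderiv h differentiable at x t
  have hdf : HasFDerivAt (fderiv ℝ h) (fderiv ℝ (fderiv ℝ h) (x t)) (x t) := by
    have : ContDiffAt ℝ 1 (fderiv ℝ h) (x t) := by
      have := hca.fderiv_right (m := 1) (by norm_num)
      exact this
    exact (this.differentiableAt (by norm_num)).hasFDerivAt
  set f'' := fderiv ℝ (fderiv ℝ h) (x t)
  have hsymm : ∀ v w, f'' v w = f'' w v := fun v w =>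
    (hca.isSymmSndFDerivAt (by norm_num)) v w
  have h1 : HasDerivAt (fun s => h (x s)) (fderiv ℝ h (x t) x') t := hdh.comp_hasDerivAt t hx
  have h2 : HasDerivAt (fun s => fderiv ℝ h (x s)) (f'' x') t := hdf.comp_hasDerivAt t hx
  have h3 : HasDerivAt (fun s => xstar - x s) (0 - x') t := (hasDerivAt_const t xstar).sub hx
  have h4 : HasDerivAt (fun s => fderiv ℝ h (x s) (xstar - x s))
      ((f'' x') (xstar - x t) + fderiv ℝ h (x t) (0 - x')) t := h2.clm_apply h3
  have h5 := ((hasDerivAt_const t (h xstar)).sub h1).sub h4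
  refine h5.congr_deriv ?_
  have := bilin_expand f'' (x t - xstar) x'
  rw [← this, hsymm]
  simp only [map_sub, ContinuousLinearMap.zero_apply, map_zero, ContinuousLinearMap.sub_apply]
  ring_nf
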